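/- arXiv:math/0504466 — 3 statements merged into one kernel-verified Lean document; each statement's English description precedes it below -/
import Mathlib

section
/- For all real y with 0 ≤ y ≤ n (n a positive integer, y real), (1 + y/n)^(-n) ≤ exp(-y/2). -/
theorem stmt_0 (n : ℕ) (hn : 0 < n) (y : ℝ) (hy0 : 0 ≤ y) (hyn : y ≤ n) :
    ((1 + y / n) ^ n)⁻¹ ≤ Real.exp (-y / 2) := by
  set x : ℝ := y / n with hxdef
  have hnpos : (0:ℝ) < n := by exact_mod_cast hn
  have hx0 : 0 ≤ x := div_nonneg hy0 hnpos.le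
  have hx1 : x ≤ 1 := (div_le_one hnpos).mpr hyn
  have key : Real.exp (x / 2) ≤ 1 + x := by
    rw [← Real.le_log_iff_exp_le (by linarith)]
    have h1 := Real.one_sub_inv_le_log_of_pos (x := 1 + x) (by linarith)
    have h2 : 1 - (1 + x)⁻¹ = x / (1 + x) := by field_simp; ring
    have h3 : x / 2 ≤ x / (1 + x) :=
      div_le_div_of_nonneg_left hx0 (by linarith) (by linarith)
    linarith [h2 ▸ h1]
  have hyx : y = n * x := by rw [hxdef]; field_simp
  have hexp : Real.exp (y / 2) = (Real.exp (x / 2)) ^ n := by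
    rw [← Real.exp_nat_mul, hyx]; ring_nf
  have hpow : Real.exp (y / 2) ≤ (1 + x) ^ n := by
    rw [hexp]
    exact pow_le_pow_left₀ (Real.exp_pos _).le key n
  rw [neg_div, Real.exp_neg]
  exact inv_anti₀ (Real.exp_pos _) hpow
end

section
/- For every R ≥ 0 and a > 0, the integral ∫_{R}^{∞} exp(-a cosh(x)/2) dx is at most φ(a) · exp(-a cosh(R)/2), where φ(a) = 2 + |log(1 - exp(-a/2))|. -/
open Real MeasureTheory Set Filter

-- cosh t ≥ 1 + t²/2
lemma aux_cosh_ge (t : ℝ) : 1 + t ^ 2 / 2 ≤ Real.cosh t := by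
  have h1 : Real.cosh t = Real.cosh (t/2) ^ 2 + Real.sinh (t/2) ^ 2 := by
    rw [← Real.cosh_two_mul]; ring_nf
  have h2 : Real.cosh (t/2) ^ 2 = Real.sinh (t/2) ^ 2 + 1 := Real.cosh_sq _
  have h3 : (t/2) ^ 2 ≤ Real.sinh (t/2) ^ 2 := by
    have := Real.abs_sinh (t/2)
    have h4 : |t/2| ≤ Real.sinh |t/2| := by
      have := Real.self_le_sinh_iff.mpr (abs_nonneg (t/2))
      exact this
    have h5 : |t/2| ≤ |Real.sinh (t/2)| := by rw [this]; exact h4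
    calc (t/2)^2 = |t/2|^2 := (sq_abs _).symm
      _ ≤ |Real.sinh (t/2)|^2 := by gcongr <;> positivity
      _ = Real.sinh (t/2)^2 := sq_abs _
  nlinarith [h3]

lemma aux_self_le_cosh (t : ℝ) : t ≤ Real.cosh t := by
  nlinarith [aux_cosh_ge t, sq_nonneg (t - 1)]

-- integrability of exp(-c cosh x) on Ioi R
lemma aux_integrable {c : ℝ} (hc : 0 < c) (R : ℝ) :
    IntegrableOn (fun x => Real.exp (-c * Real.cosh x)) (Set.Ioi R) := by
  have hcont : Continuous (fun x : ℝ => Real.exp (-c * Real.cosh x)) := by fun_prop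
  apply Integrable.mono (exp_neg_integrableOn_Ioi R hc) hcont.aestronglyMeasurable.restrict
  filter_upwards with x
  rw [Real.norm_eq_abs, Real.norm_eq_abs, abs_of_nonneg (Real.exp_pos _).le,
    abs_of_nonneg (Real.exp_pos _).le]
  apply Real.exp_le_exp.mpr
  have := aux_self_le_cosh x
  nlinarith

-- inequality (A)
lemma aux_ineqA {l : ℝ} (h0 : 0 < l) (h1 : l ≤ 2/5) :
    1 - Real.exp (-l) ≤ l * (Real.exp (-l) * (2 - Real.exp (-l))) := by
  have hb := Real.exp_bound (x := -l) (by rw [abs_of_nonpos (by linarith)]; linarith) (n := 4) (by norm_num)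
  have hsum : (∑ i ∈ Finset.range 4, (-l) ^ i / (Nat.factorial i)) = 1 - l + l^2/2 - l^3/6 := by
    simp [Finset.sum_range_succ, Nat.factorial]
    ring
  have habs : |(-l)| = l := by rw [abs_of_nonpos (by linarith)]; ring
  rw [hsum, habs, abs_le] at hb
  have hb1 := hb.1
  have hfac : ((Nat.factorial 4 : ℝ)) = 24 := by norm_num [Nat.factorial]
  rw [hfac] at hb1
  have hb' : 1 - l + l^2/2 - l^3/6 - 5*l^4/96 ≤ Real.exp (-l) := by
    have : (Nat.succ 4 : ℝ) = 5 := by norm_num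
    rw [this] at hb1
    have h4 : l ^ 4 * (5 / (24 * (4:ℝ))) = 5*l^4/96 := by ring
    nlinarith [hb1]
  have hx1 : Real.exp (-l) ≤ 1 := Real.exp_le_one_iff.mpr (by linarith)
  set x := Real.exp (-l) with hxdef
  set q : ℝ := 1 - l + l^2/2 - l^3/6 - 5*l^4/96 with hqdef
  have hq : q ≤ x := hb'
  have hq1 : q ≤ 1 := le_trans hq hx1
  have hkey : 1 - q ≤ l * (q * (2 - q)) := by
    rw [hqdef]
    nlinarith [sq_nonneg l, sq_nonneg (l - 2/5), sq_nonneg (l^2), sq_nonneg (l^3),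
      mul_pos h0 h0, pow_le_pow_left₀ h0.le h1 2, pow_le_pow_left₀ h0.le h1 3,
      pow_le_pow_left₀ h0.le h1 4, pow_le_pow_left₀ h0.le h1 5, pow_le_pow_left₀ h0.le h1 6,
      pow_le_pow_left₀ h0.le h1 7]
  have hfac2 : 0 ≤ 1 + 2*l - l*(x+q) := by nlinarith
  nlinarith [mul_nonneg (sub_nonneg.2 hq) hfac2]

lemma aux_integrable_shift {c : ℝ} (hc : 0 < c) (R : ℝ) :
    IntegrableOn (fun x => Real.exp (-c * Real.cosh (x - R))) (Set.Ioi R) := by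
  have hcont : Continuous (fun x : ℝ => Real.exp (-c * Real.cosh (x - R))) := by fun_prop
  apply Integrable.mono ((exp_neg_integrableOn_Ioi R hc).const_mul (Real.exp (c * R)))
    hcont.aestronglyMeasurable.restrict
  filter_upwards with x
  rw [Real.norm_eq_abs, Real.norm_eq_abs, abs_of_nonneg (Real.exp_pos _).le,
    abs_of_nonneg (by positivity)]
  rw [← Real.exp_add]
  apply Real.exp_le_exp.mpr
  have := aux_self_le_cosh (x - R)
  nlinarith

lemma aux_key {l : ℝ} (hl : 0 < l) :
    ∫ t in Set.Ioi (0:ℝ), Real.exp (-l * Real.cosh t) ≤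
      (2 + |Real.log (1 - Real.exp (-l))|) * Real.exp (-l) := by
  have hx0 : 0 < Real.exp (-l) := Real.exp_pos _
  have hx1 : Real.exp (-l) < 1 := Real.exp_lt_one_iff.mpr (by linarith)
  have h1x : 0 < 1 - Real.exp (-l) := by linarith
  have h1x' : 1 - Real.exp (-l) < 1 := by linarith
  have habs : |Real.log (1 - Real.exp (-l))| = -Real.log (1 - Real.exp (-l)) :=
    abs_of_neg (Real.log_neg h1x h1x')
  rcases le_or_gt (2/5) l with hcase | hcase
  · -- large l : gaussian bound
    have step1 : ∫ t in Set.Ioi (0:ℝ), Real.exp (-l * Real.cosh t) ≤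
        ∫ t in Set.Ioi (0:ℝ), Real.exp (-l) * Real.exp (-(l/2) * t^2) := by
      apply setIntegral_mono_on (aux_integrable hl 0)
        (((integrable_exp_neg_mul_sq (by linarith : (0:ℝ) < l/2)).const_mul _).integrableOn)
        measurableSet_Ioi
      intro t _
      rw [← Real.exp_add]
      apply Real.exp_le_exp.mpr
      nlinarith [aux_cosh_ge t]
    have step2 : ∫ t in Set.Ioi (0:ℝ), Real.exp (-l) * Real.exp (-(l/2) * t^2)
        = Real.exp (-l) * (Real.sqrt (Real.pi / (l/2)) / 2) := by
      rw [integral_const_mul, integral_gaussian_Ioi]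
    have step3 : Real.sqrt (Real.pi / (l/2)) / 2 ≤ 2 := by
      have h16 : Real.pi / (l/2) ≤ 16 := by
        rw [div_le_iff₀ (by linarith)]
        nlinarith [Real.pi_lt_d2]
      have := Real.sqrt_le_sqrt h16
      rw [show (16:ℝ) = 4^2 by norm_num, Real.sqrt_sq (by norm_num)] at this
      linarith
    calc ∫ t in Set.Ioi (0:ℝ), Real.exp (-l * Real.cosh t)
        ≤ Real.exp (-l) * (Real.sqrt (Real.pi / (l/2)) / 2) := by rw [← step2]; exact step1
      _ ≤ Real.exp (-l) * 2 := by nlinarith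
      _ ≤ (2 + |Real.log (1 - Real.exp (-l))|) * Real.exp (-l) := by
          nlinarith [abs_nonneg (Real.log (1 - Real.exp (-l)))]
  · -- small l : split at T
    set T : ℝ := -Real.log (1 - Real.exp (-l)) with hTdef
    have hT : 0 < T := by simp only [hTdef]; linarith [Real.log_neg h1x h1x']
    have hexpT : Real.exp T = (1 - Real.exp (-l))⁻¹ := by
      rw [hTdef, Real.exp_neg, Real.exp_log h1x]
    have hexpnT : Real.exp (-T) = 1 - Real.exp (-l) := by
      rw [hTdef, neg_neg, Real.exp_log h1x]
    have hsinhT : Real.sinh T = ((1 - Real.exp (-l))⁻¹ - (1 - Real.exp (-l))) / 2 := by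
      rw [Real.sinh_eq, hexpT, hexpnT]
    have hsinhT_pos : 0 < Real.sinh T := by
      rwa [← Real.sinh_zero, Real.sinh_lt_sinh]
    -- FTC for the tail
    set g : ℝ → ℝ := fun t => -(1/l) * Real.exp (-l * Real.cosh t) with hgdef
    set g' : ℝ → ℝ := fun t => Real.sinh t * Real.exp (-l * Real.cosh t) with hg'def
    have hderiv : ∀ t ∈ Set.Ioi T, HasDerivAt g (g' t) t := by
      intro t _
      have h1 : HasDerivAt (fun t : ℝ => -l * Real.cosh t) (-l * Real.sinh t) t :=
        (Real.hasDerivAt_cosh t).const_mul (-l)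
      have h2 := h1.exp
      have h3 := h2.const_mul (-(1/l))
      refine h3.congr_deriv ?_
      rw [hg'def]
      field_simp
    have hg'pos : ∀ t ∈ Set.Ioi T, 0 ≤ g' t := by
      intro t ht
      have h0t : (0:ℝ) ≤ t := (hT.trans ht).le
      have hs : Real.sinh 0 ≤ Real.sinh t := Real.sinh_le_sinh.mpr h0t
      rw [Real.sinh_zero] at hs
      exact mul_nonneg hs (Real.exp_pos _).le
    have htend : Tendsto g atTop (nhds 0) := by
      have hb : Tendsto (fun t : ℝ => Real.exp (-(l * t))) atTop (nhds 0) :=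
        Real.tendsto_exp_neg_atTop_nhds_zero.comp (Tendsto.const_mul_atTop hl tendsto_id)
      have hsq : Tendsto (fun t : ℝ => Real.exp (-l * Real.cosh t)) atTop (nhds 0) := by
        apply squeeze_zero (fun t => (Real.exp_pos _).le) (fun t => ?_) hb
        apply Real.exp_le_exp.mpr
        have := aux_self_le_cosh t
        nlinarith
      rw [hgdef]
      have h := hsq.const_mul (-(1/l))
      simpa using h
    have hcont : ContinuousWithinAt g (Set.Ici T) T := by
      apply Continuous.continuousWithinAt; fun_prop
    have hEq : ∫ t in Set.Ioi T, g' t = 0 - g T :=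
      integral_Ioi_of_hasDerivAt_of_nonneg hcont hderiv hg'pos htend
    have hInt : IntegrableOn g' (Set.Ioi T) :=
      integrableOn_Ioi_deriv_of_nonneg hcont hderiv hg'pos htend
    -- tail bound
    have tail1 : ∫ t in Set.Ioi T, Real.exp (-l * Real.cosh t) ≤
        ∫ t in Set.Ioi T, (Real.sinh T)⁻¹ * g' t := by
      apply setIntegral_mono_on (aux_integrable hl T) (hInt.const_mul _) measurableSet_Ioi
      intro t ht
      have hst : Real.sinh T ≤ Real.sinh t := Real.sinh_le_sinh.mpr (le_of_lt ht)
      rw [hg'def]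
      dsimp only
      rw [inv_mul_eq_div, le_div_iff₀ hsinhT_pos]
      nlinarith [Real.exp_pos (-l * Real.cosh t)]
    have tail2 : ∫ t in Set.Ioi T, (Real.sinh T)⁻¹ * g' t
        = (Real.sinh T)⁻¹ * ((1/l) * Real.exp (-l * Real.cosh T)) := by
      rw [integral_const_mul, hEq, hgdef]
      dsimp only
      ring
    have hcoshT : Real.exp (-l * Real.cosh T) ≤ Real.exp (-l) := by
      apply Real.exp_le_exp.mpr
      nlinarith [Real.one_le_cosh T]
    have hA := aux_ineqA hl hcase.le
    have hls : 1 ≤ 2 * (l * Real.sinh T) := by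
      rw [hsinhT]
      have e : (1 - Real.exp (-l))⁻¹ - (1 - Real.exp (-l))
          = (Real.exp (-l) * (2 - Real.exp (-l))) / (1 - Real.exp (-l)) := by
        field_simp
        ring
      rw [e]
      rw [show 2 * (l * (Real.exp (-l) * (2 - Real.exp (-l)) / (1 - Real.exp (-l)) / 2))
        = l * (Real.exp (-l) * (2 - Real.exp (-l))) / (1 - Real.exp (-l)) by ring]
      rw [le_div_iff₀ h1x]
      linarith
    have tail3 : (Real.sinh T)⁻¹ * ((1/l) * Real.exp (-l * Real.cosh T)) ≤ 2 * Real.exp (-l) := by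
      rw [show (Real.sinh T)⁻¹ * ((1/l) * Real.exp (-l * Real.cosh T))
        = (1/(l * Real.sinh T)) * Real.exp (-l * Real.cosh T) by
          field_simp]
      have h2' : (1:ℝ)/(l * Real.sinh T) ≤ 2 := by
        rw [div_le_iff₀ (by positivity)]
        linarith
      apply mul_le_mul h2' hcoshT (Real.exp_pos _).le (by norm_num)
    -- head bound
    have head : ∫ t in Set.Ioc 0 T, Real.exp (-l * Real.cosh t) ≤ T * Real.exp (-l) := by
      have hmono : ∫ t in Set.Ioc 0 T, Real.exp (-l * Real.cosh t) ≤
          ∫ _ in Set.Ioc (0:ℝ) T, Real.exp (-l) := by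
        apply setIntegral_mono_on ((aux_integrable hl 0).mono_set Set.Ioc_subset_Ioi_self)
          (integrableOn_const measure_Ioc_lt_top.ne) measurableSet_Ioc
        intro t _
        apply Real.exp_le_exp.mpr
        nlinarith [Real.one_le_cosh t]
      rw [setIntegral_const] at hmono
      rwa [Real.volume_real_Ioc_of_le hT.le, sub_zero, smul_eq_mul] at hmono
    -- split
    have hsplit : ∫ t in Set.Ioi (0:ℝ), Real.exp (-l * Real.cosh t)
        = (∫ t in Set.Ioc 0 T, Real.exp (-l * Real.cosh t))
          + ∫ t in Set.Ioi T, Real.exp (-l * Real.cosh t) := by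
      rw [← setIntegral_union (Set.Ioc_disjoint_Ioi le_rfl) measurableSet_Ioi
        ((aux_integrable hl 0).mono_set Set.Ioc_subset_Ioi_self) (aux_integrable hl T),
        Set.Ioc_union_Ioi_eq_Ioi hT.le]
    rw [hsplit, habs]
    have htail : ∫ t in Set.Ioi T, Real.exp (-l * Real.cosh t) ≤ 2 * Real.exp (-l) :=
      tail1.trans (tail2.le.trans tail3)
    calc (∫ t in Set.Ioc 0 T, Real.exp (-l * Real.cosh t))
          + ∫ t in Set.Ioi T, Real.exp (-l * Real.cosh t)
        ≤ T * Real.exp (-l) + 2 * Real.exp (-l) := add_le_add head htail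
      _ = (2 + T) * Real.exp (-l) := by ring

theorem stmt_5 (R a : ℝ) (hR : 0 ≤ R) (ha : 0 < a) :
    ∫ x in Set.Ioi R, Real.exp (-a * Real.cosh x / 2) ≤
      (2 + |Real.log (1 - Real.exp (-a / 2))|) * Real.exp (-a * Real.cosh R / 2) := by
  set l : ℝ := a / 2 with hldef
  have hl : 0 < l := by positivity
  have hrw : ∀ y : ℝ, -a * Real.cosh y / 2 = -l * Real.cosh y := fun y => by
    rw [hldef]; ring
  have hrw2 : -a / 2 = -l := by rw [hldef]; ring
  simp only [hrw, hrw2]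
  -- pointwise bound and shift
  have step1 : ∫ x in Set.Ioi R, Real.exp (-l * Real.cosh x) ≤
      ∫ x in Set.Ioi R, Real.exp (l * (1 - Real.cosh R)) * Real.exp (-l * Real.cosh (x - R)) := by
    apply setIntegral_mono_on (aux_integrable hl R)
      ((aux_integrable_shift hl R).const_mul _) measurableSet_Ioi
    intro x hx
    rw [← Real.exp_add]
    apply Real.exp_le_exp.mpr
    have he : Real.cosh x = Real.cosh (x - R) * Real.cosh R + Real.sinh (x - R) * Real.sinh R := by
      rw [← Real.cosh_add]; ring_nf
    have hs1 : (0:ℝ) ≤ Real.sinh (x - R) := by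
      have : Real.sinh 0 ≤ Real.sinh (x - R) := Real.sinh_le_sinh.mpr (by
        simp only [Set.mem_Ioi] at hx; linarith)
      rwa [Real.sinh_zero] at this
    have hs2 : (0:ℝ) ≤ Real.sinh R := by
      have : Real.sinh 0 ≤ Real.sinh R := Real.sinh_le_sinh.mpr hR
      rwa [Real.sinh_zero] at this
    nlinarith [mul_nonneg hl.le (mul_nonneg (sub_nonneg.2 (Real.one_le_cosh (x - R)))
      (sub_nonneg.2 (Real.one_le_cosh R))), mul_nonneg hl.le (mul_nonneg hs1 hs2)]
  have hshift : ∫ x in Set.Ioi R, Real.exp (-l * Real.cosh (x - R))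
      = ∫ t in Set.Ioi (0:ℝ), Real.exp (-l * Real.cosh t) := by
    have h := (measurePreserving_add_right volume R).setIntegral_preimage_emb
      (measurableEmbedding_addRight R)
      (fun y => Real.exp (-l * Real.cosh (y - R))) (Set.Ioi R)
    have hpre : (fun x : ℝ => x + R) ⁻¹' Set.Ioi R = Set.Ioi 0 := by
      ext x; simp [Set.mem_Ioi]
    rw [hpre] at h
    rw [← h]
    apply setIntegral_congr_fun measurableSet_Ioi
    intro t _
    simp
  calc ∫ x in Set.Ioi R, Real.exp (-l * Real.cosh x)
      ≤ ∫ x in Set.Ioi R, Real.exp (l * (1 - Real.cosh R)) * Real.exp (-l * Real.cosh (x - R)) :=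
        step1
    _ = Real.exp (l * (1 - Real.cosh R)) * ∫ x in Set.Ioi R, Real.exp (-l * Real.cosh (x - R)) :=
        integral_const_mul _ _
    _ = Real.exp (l * (1 - Real.cosh R)) * ∫ t in Set.Ioi (0:ℝ), Real.exp (-l * Real.cosh t) := by
        rw [hshift]
    _ ≤ Real.exp (l * (1 - Real.cosh R)) * ((2 + |Real.log (1 - Real.exp (-l))|) * Real.exp (-l)) :=
        mul_le_mul_of_nonneg_left (aux_key hl) (Real.exp_pos _).le
    _ = (2 + |Real.log (1 - Real.exp (-l))|) * Real.exp (-l * Real.cosh R) := by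
        rw [mul_comm (Real.exp (l * (1 - Real.cosh R))), mul_assoc, ← Real.exp_add]
        ring_nf
end

section
/- For R ≥ 0, a > 0 and integer n ≥ 2, ∫_{R}^{∞} (1 + (a/n) cosh x)^{-n} dx ≤ φ(a) · exp(-a cosh(R)/2) + (1 + (a/n) cosh R)^{-(n-1)}, where φ(a) = 2 + |log(1 - exp(-a/2))|. -/
open Real MeasureTheory Set Filter

private lemma exp_half_le {u : ℝ} (h0 : 0 ≤ u) (h2 : u ≤ 2) : Real.exp (u / 2) ≤ 1 + u := by
  have h := Real.exp_bound' (x := u / 2) (by linarith) (by linarith) (n := 2) (by norm_num)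
  simp [Finset.sum_range_succ] at h
  nlinarith [sq_nonneg u]

private lemma exp_div_two_le_cosh (x : ℝ) : Real.exp x / 2 ≤ Real.cosh x := by
  rw [Real.cosh_eq]; have := Real.exp_pos (-x); linarith

private lemma cosh_le_exp {x : ℝ} (hx : 0 ≤ x) : Real.cosh x ≤ Real.exp x := by
  rw [Real.cosh_eq]
  have := Real.exp_le_exp.2 (by linarith : -x ≤ x)
  linarith

private lemma self_le_cosh {t : ℝ} (ht : 0 ≤ t) : t ≤ Real.cosh t := by
  have h1 := Real.add_one_le_exp (t / 2)
  have h2 : (t / 2 + 1) ^ 2 ≤ Real.exp t := by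
    have : Real.exp t = Real.exp (t / 2) ^ 2 := by
      rw [← Real.exp_nat_mul]; congr 1; push_cast; ring
    rw [this]
    exact pow_le_pow_left₀ (by linarith) h1 2
  have := exp_div_two_le_cosh t
  nlinarith [sq_nonneg (t / 2 - 1)]

private lemma cosh_lower {R x : ℝ} (hR : 0 ≤ R) (hx : R ≤ x) :
    Real.cosh R + Real.cosh (x - R) - 1 ≤ Real.cosh x := by
  have h : Real.cosh x = Real.cosh R * Real.cosh (x - R) + Real.sinh R * Real.sinh (x - R) := by
    rw [← Real.cosh_add]; ring_nf
  have h1 := Real.one_le_cosh R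
  have h2 := Real.one_le_cosh (x - R)
  have h3 : 0 ≤ Real.sinh R := Real.sinh_nonneg_iff.2 hR
  have h4 : 0 ≤ Real.sinh (x - R) := Real.sinh_nonneg_iff.2 (by linarith)
  nlinarith

private lemma cosh_sub_one_ge {t : ℝ} (ht : 2 ≤ t) :
    Real.exp (t - 13/10) ≤ Real.cosh t - 1 := by
  have h1 : Real.exp (t - 13/10) = Real.exp t * (Real.exp (13/10))⁻¹ := by
    rw [Real.exp_sub]; ring
  have he1 : (2.7182818283 : ℝ) < Real.exp 1 := Real.exp_one_gt_d9
  have he3 : (13/10 : ℝ) ≤ Real.exp (3/10) := by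
    nlinarith [Real.add_one_le_exp (3/10 : ℝ)]
  have he13 : (3.5 : ℝ) ≤ Real.exp (13/10) := by
    have : Real.exp (13/10 : ℝ) = Real.exp 1 * Real.exp (3/10) := by
      rw [← Real.exp_add]; norm_num
    rw [this]
    nlinarith [Real.exp_pos (3/10 : ℝ)]
  have ht2 : (7.38 : ℝ) ≤ Real.exp t := by
    have : Real.exp 2 = Real.exp 1 * Real.exp 1 := by rw [← Real.exp_add]; norm_num
    have h2 : (7.38 : ℝ) ≤ Real.exp 2 := by rw [this]; nlinarith
    exact h2.trans (Real.exp_le_exp.2 ht)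
  have hc := exp_div_two_le_cosh t
  have hinv : (Real.exp (13/10))⁻¹ ≤ 1/3.5 := by
    rw [inv_le_comm₀ ((by linarith : (0:ℝ) < 3.5).trans_le he13) (by norm_num)]
    linarith
  rw [h1]
  have hp := Real.exp_pos t
  nlinarith

private lemma tail_hasDeriv (b d : ℝ) (x : ℝ) :
    HasDerivAt (fun x => -Real.exp (-(b * Real.exp (x - d))))
      (b * Real.exp (x - d) * Real.exp (-(b * Real.exp (x - d)))) x := by
  have h1 : HasDerivAt (fun x : ℝ => x - d) 1 x := (hasDerivAt_id x).sub_const d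
  have h2 : HasDerivAt (fun x : ℝ => Real.exp (x - d)) (Real.exp (x - d)) x := by
    simpa using h1.exp
  have h3 : HasDerivAt (fun x : ℝ => -(b * Real.exp (x - d))) (-(b * Real.exp (x - d))) x := by
    simpa using (h2.const_mul b).fun_neg
  have h4 := h3.exp
  exact h4.fun_neg.congr_deriv (by ring)

private lemma tail_tendsto (b d : ℝ) (hb : 0 < b) :
    Tendsto (fun x => -Real.exp (-(b * Real.exp (x - d)))) atTop (nhds 0) := by
  have h1 : Tendsto (fun x : ℝ => x - d) atTop atTop := tendsto_atTop_add_const_right _ (-d) tendsto_id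
  have h2 : Tendsto (fun x : ℝ => b * Real.exp (x - d)) atTop atTop :=
    (Real.tendsto_exp_atTop.comp h1).const_mul_atTop hb
  have h3 : Tendsto (fun x : ℝ => -(b * Real.exp (x - d))) atTop atBot := tendsto_neg_atBot_iff.2 h2
  have h4 := Real.tendsto_exp_atBot.comp h3
  simpa using h4.neg

private lemma tail_integral (b d T : ℝ) (hb : 0 < b) :
    ∫ x in Set.Ioi T, b * Real.exp (x - d) * Real.exp (-(b * Real.exp (x - d)))
      = Real.exp (-(b * Real.exp (T - d))) := by
  have h := integral_Ioi_of_hasDerivAt_of_nonneg' (a := T)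
    (g := fun x => -Real.exp (-(b * Real.exp (x - d))))
    (g' := fun x => b * Real.exp (x - d) * Real.exp (-(b * Real.exp (x - d))))
    (fun x _ => tail_hasDeriv b d x)
    (fun x _ => by positivity) (tail_tendsto b d hb)
  simpa using h

private lemma tail_integrable (b d T : ℝ) (hb : 0 < b) :
    IntegrableOn (fun x => b * Real.exp (x - d) * Real.exp (-(b * Real.exp (x - d))))
      (Set.Ioi T) := by
  exact integrableOn_Ioi_deriv_of_nonneg' (fun x _ => tail_hasDeriv b d x)
    (fun x _ => by positivity) (tail_tendsto b d hb)

private lemma K_integrable {b : ℝ} (R : ℝ) (hb : 0 < b) :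
    IntegrableOn (fun x => Real.exp (-(b * (Real.cosh (x - R) - 1)))) (Set.Ioi R) := by
  have hmaj : IntegrableOn (fun x => Real.exp (b * (1 + R)) * Real.exp (-b * x)) (Set.Ioi R) :=
    (exp_neg_integrableOn_Ioi R hb).const_mul _
  refine Integrable.mono hmaj ?_ ?_
  · exact (Real.continuous_exp.comp (by continuity)).aestronglyMeasurable.restrict
  · filter_upwards [ae_restrict_mem measurableSet_Ioi] with x hx
    rw [mem_Ioi] at hx
    have h1 : x - R ≤ Real.cosh (x - R) := self_le_cosh (by linarith)
    rw [Real.norm_eq_abs, Real.norm_eq_abs, abs_of_nonneg (Real.exp_pos _).le,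
      abs_of_nonneg (by positivity)]
    rw [← Real.exp_add]
    apply Real.exp_le_exp.2
    nlinarith

private lemma log_facts {b : ℝ} (hb : 0 < b) :
    0 < 1 - Real.exp (-b) ∧ 1 - Real.exp (-b) ≤ b ∧
      Real.exp (-b) ≤ |Real.log (1 - Real.exp (-b))| := by
  have h1 : Real.exp (-b) < 1 := Real.exp_lt_one_iff.2 (by linarith)
  have h0 : 0 < 1 - Real.exp (-b) := by linarith
  have h2 : 1 - Real.exp (-b) ≤ b := by
    have := Real.add_one_le_exp (-b); linarith
  have h3 : Real.log (1 - Real.exp (-b)) ≤ -Real.exp (-b) := by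
    have := Real.log_le_sub_one_of_pos h0; linarith
  refine ⟨h0, h2, ?_⟩
  calc Real.exp (-b) ≤ -Real.log (1 - Real.exp (-b)) := by linarith
  _ ≤ |Real.log (1 - Real.exp (-b))| := neg_le_abs _

private lemma piece_bound {b : ℝ} (hb : 0 ≤ b) (R u v : ℝ) (huv : u ≤ v) :
    ∫ x in Set.Ioc u v, Real.exp (-(b * (Real.cosh (x - R) - 1))) ≤ v - u := by
  have hnorm : ‖∫ x in Set.Ioc u v, Real.exp (-(b * (Real.cosh (x - R) - 1)))‖
      ≤ 1 * (volume (Set.Ioc u v)).toReal := by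
    apply norm_setIntegral_le_of_norm_le_const
    · rw [Real.volume_Ioc]; exact ENNReal.ofReal_lt_top
    · intro x _
      rw [Real.norm_eq_abs, abs_of_nonneg (Real.exp_pos _).le]
      exact Real.exp_le_one_iff.2 (by nlinarith [Real.one_le_cosh (x - R)])
  calc ∫ x in Set.Ioc u v, Real.exp (-(b * (Real.cosh (x - R) - 1)))
      ≤ ‖∫ x in Set.Ioc u v, Real.exp (-(b * (Real.cosh (x - R) - 1)))‖ := le_abs_self _
  _ ≤ 1 * (volume (Set.Ioc u v)).toReal := hnorm
  _ = v - u := by rw [one_mul, Real.volume_Ioc, ENNReal.toReal_ofReal (by linarith)]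

private lemma tail_bound {b : ℝ} (R T : ℝ) (hb : 0 < b) (hT : R + 2 ≤ T)
    (h1 : 1 ≤ b * Real.exp (T - (R + 13/10))) :
    ∫ x in Set.Ioi T, Real.exp (-(b * (Real.cosh (x - R) - 1)))
      ≤ Real.exp (-(b * Real.exp (T - (R + 13/10)))) := by
  rw [← tail_integral b (R + 13/10) T hb]
  apply setIntegral_mono_on
    ((K_integrable R hb).mono_set (Set.Ioi_subset_Ioi (by linarith)))
    (tail_integrable b (R + 13/10) T hb) measurableSet_Ioi
  intro x hx
  rw [Set.mem_Ioi] at hx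
  have hx2 : 2 ≤ x - R := by linarith
  have hrw : x - (R + 13/10) = (x - R) - 13/10 := by ring
  have step1 : Real.exp (-(b * (Real.cosh (x - R) - 1)))
      ≤ Real.exp (-(b * Real.exp (x - (R + 13/10)))) := by
    apply Real.exp_le_exp.2
    rw [hrw]
    nlinarith [cosh_sub_one_ge hx2]
  refine step1.trans ?_
  have hy : 1 ≤ b * Real.exp (x - (R + 13/10)) :=
    h1.trans (mul_le_mul_of_nonneg_left (Real.exp_le_exp.2 (by linarith)) hb.le)
  exact le_mul_of_one_le_left (Real.exp_pos _).le hy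

private lemma K_bound {b : ℝ} (R : ℝ) (hb : 0 < b) :
    ∫ x in Set.Ioi R, Real.exp (-(b * (Real.cosh (x - R) - 1)))
      ≤ 2 + |Real.log (1 - Real.exp (-b))| := by
  obtain ⟨hpos, hle, habs⟩ := log_facts hb
  have hint := K_integrable R hb
  have hsplit : ∫ x in Set.Ioi R, Real.exp (-(b * (Real.cosh (x - R) - 1)))
      = (∫ x in Set.Ioc R (R + 2), Real.exp (-(b * (Real.cosh (x - R) - 1))))
        + ∫ x in Set.Ioi (R + 2), Real.exp (-(b * (Real.cosh (x - R) - 1))) := by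
    rw [← Set.Ioc_union_Ioi_eq_Ioi (by linarith : R ≤ R + 2),
      setIntegral_union (Set.Ioc_disjoint_Ioi le_rfl) measurableSet_Ioi
        (hint.mono_set ((Set.Ioc_union_Ioi_eq_Ioi (by linarith : R ≤ R + 2)) ▸
          Set.subset_union_left))
        (hint.mono_set (Set.Ioi_subset_Ioi (by linarith)))]
  have p1 : ∫ x in Set.Ioc R (R + 2), Real.exp (-(b * (Real.cosh (x - R) - 1))) ≤ 2 := by
    have := piece_bound hb.le R R (R + 2) (by linarith)
    linarith
  rcases le_or_gt 1 (b * Real.exp (7/10 : ℝ)) with hA | hB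
  · -- case A
    have t1 : (R + 2) - (R + 13/10) = (7/10 : ℝ) := by ring
    have p2 : ∫ x in Set.Ioi (R + 2), Real.exp (-(b * (Real.cosh (x - R) - 1)))
        ≤ Real.exp (-(b * Real.exp (7/10 : ℝ))) := by
      have h := tail_bound R (R + 2) hb le_rfl (by rw [t1]; exact hA)
      rwa [t1] at h
    have h2 : Real.exp (-(b * Real.exp (7/10 : ℝ))) ≤ Real.exp (-b) := by
      apply Real.exp_le_exp.2
      nlinarith [Real.one_le_exp (show (0:ℝ) ≤ 7/10 by norm_num)]
    linarith
  · -- case B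
    have hE := Real.exp_pos (7/10 : ℝ)
    have hblt : b < Real.exp (-(7/10 : ℝ)) := by
      have h2 := mul_lt_mul_of_pos_right hB (inv_pos.2 hE)
      rw [mul_assoc, mul_inv_cancel₀ hE.ne', mul_one, one_mul] at h2
      rw [Real.exp_neg]; exact h2
    have hlogb : Real.log b < -(7/10 : ℝ) := by
      have h := Real.log_lt_log hb hblt
      rwa [Real.log_exp] at h
    have h2t : (2 : ℝ) < 13/10 - Real.log b := by linarith
    have hsplit2 : ∫ x in Set.Ioi (R + 2), Real.exp (-(b * (Real.cosh (x - R) - 1)))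
        = (∫ x in Set.Ioc (R + 2) (R + (13/10 - Real.log b)),
            Real.exp (-(b * (Real.cosh (x - R) - 1))))
          + ∫ x in Set.Ioi (R + (13/10 - Real.log b)),
            Real.exp (-(b * (Real.cosh (x - R) - 1))) := by
      rw [← Set.Ioc_union_Ioi_eq_Ioi (by linarith : R + 2 ≤ R + (13/10 - Real.log b)),
        setIntegral_union (Set.Ioc_disjoint_Ioi le_rfl) measurableSet_Ioi
          (hint.mono_set (fun x hx => Set.mem_Ioi.2 (by
            have h := hx.1; linarith)))
          (hint.mono_set (Set.Ioi_subset_Ioi (by linarith)))]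
    have p2a : ∫ x in Set.Ioc (R + 2) (R + (13/10 - Real.log b)),
        Real.exp (-(b * (Real.cosh (x - R) - 1))) ≤ (13/10 - Real.log b) - 2 := by
      have := piece_bound hb.le R (R + 2) (R + (13/10 - Real.log b)) (by linarith)
      linarith
    have t2 : (R + (13/10 - Real.log b)) - (R + 13/10) = -Real.log b := by ring
    have hexplog : Real.exp (-Real.log b) = b⁻¹ := by
      rw [Real.exp_neg, Real.exp_log hb]
    have p2b : ∫ x in Set.Ioi (R + (13/10 - Real.log b)),
        Real.exp (-(b * (Real.cosh (x - R) - 1))) ≤ Real.exp (-1 : ℝ) := by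
      have h := tail_bound R (R + (13/10 - Real.log b)) hb (by linarith)
        (by rw [t2, hexplog, mul_inv_cancel₀ hb.ne'])
      rw [t2, hexplog, mul_inv_cancel₀ hb.ne'] at h
      exact h
    have hexpinv : Real.exp (-1 : ℝ) ≤ 7/10 := by
      rw [Real.exp_neg]
      have he1 : (2.7182818283 : ℝ) < Real.exp 1 := Real.exp_one_gt_d9
      rw [inv_le_comm₀ (by linarith) (by norm_num)]
      linarith
    have hloglog : -Real.log b ≤ |Real.log (1 - Real.exp (-b))| := by
      have h := Real.log_le_log hpos hle
      calc -Real.log b ≤ -Real.log (1 - Real.exp (-b)) := by linarith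
      _ ≤ |Real.log (1 - Real.exp (-b))| := neg_le_abs _
    linarith

private lemma expcosh_integrable {a : ℝ} (R : ℝ) (ha : 0 < a) (hR : 0 ≤ R) :
    IntegrableOn (fun x => Real.exp (-(a * Real.cosh x / 2))) (Set.Ioi R) := by
  refine Integrable.mono (exp_neg_integrableOn_Ioi R (half_pos ha)) ?_ ?_
  · exact (Real.continuous_exp.comp (by continuity)).aestronglyMeasurable.restrict
  · filter_upwards [ae_restrict_mem measurableSet_Ioi] with x hx
    rw [Set.mem_Ioi] at hx
    have h1 : x ≤ Real.cosh x := self_le_cosh (by linarith)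
    rw [Real.norm_eq_abs, Real.norm_eq_abs, abs_of_nonneg (Real.exp_pos _).le,
      abs_of_nonneg (Real.exp_pos _).le]
    apply Real.exp_le_exp.2
    nlinarith

private lemma expIntegral {a : ℝ} (R : ℝ) (ha : 0 < a) (hR : 0 ≤ R) :
    ∫ x in Set.Ioi R, Real.exp (-(a * Real.cosh x / 2))
      ≤ (2 + |Real.log (1 - Real.exp (-a / 2))|) * Real.exp (-(a * Real.cosh R / 2)) := by
  have hb : 0 < a / 2 := half_pos ha
  have step1 : ∫ x in Set.Ioi R, Real.exp (-(a * Real.cosh x / 2))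
      ≤ ∫ x in Set.Ioi R, Real.exp (-(a * Real.cosh R / 2))
          * Real.exp (-(a / 2 * (Real.cosh (x - R) - 1))) := by
    apply setIntegral_mono_on (expcosh_integrable R ha hR)
      ((K_integrable R hb).const_mul _) measurableSet_Ioi
    intro x hx
    rw [Set.mem_Ioi] at hx
    rw [← Real.exp_add]
    apply Real.exp_le_exp.2
    have h := cosh_lower hR hx.le
    nlinarith
  rw [integral_const_mul] at step1
  have step2 := K_bound R hb
  have he : (0:ℝ) ≤ Real.exp (-(a * Real.cosh R / 2)) := (Real.exp_pos _).le
  calc ∫ x in Set.Ioi R, Real.exp (-(a * Real.cosh x / 2))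
      ≤ Real.exp (-(a * Real.cosh R / 2))
        * ∫ x in Set.Ioi R, Real.exp (-(a / 2 * (Real.cosh (x - R) - 1))) := step1
  _ ≤ Real.exp (-(a * Real.cosh R / 2)) * (2 + |Real.log (1 - Real.exp (-(a / 2)))|) := by
      apply mul_le_mul_of_nonneg_left _ he
      exact step2
  _ = (2 + |Real.log (1 - Real.exp (-a / 2))|) * Real.exp (-(a * Real.cosh R / 2)) := by
      rw [neg_div]; ring

theorem stmt_6 (R a : ℝ) (hR : 0 ≤ R) (ha : 0 < a) (n : ℕ) (hn : 2 ≤ n) :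
    ∫ x in Set.Ioi R, ((1 + a / n * Real.cosh x) ^ n)⁻¹ ≤
      (2 + |Real.log (1 - Real.exp (-a / 2))|) * Real.exp (-a * Real.cosh R / 2) +
        ((1 + a / n * Real.cosh R) ^ (n - 1))⁻¹ := by
  have hnn : 0 < n := by omega
  have hn0 : (0:ℝ) < n := by exact_mod_cast hnn
  set c : ℝ := a / n with hc_def
  have hc : 0 < c := div_pos ha hn0
  have hcn : c * n = a := by rw [hc_def]; field_simp
  set M : ℝ := ((1 + c * Real.cosh R) ^ (n - 1))⁻¹ with hM_def
  have hbase : ∀ x : ℝ, 0 < 1 + c * Real.cosh x := fun x => by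
    nlinarith [Real.one_le_cosh x]
  have hgcont : Continuous fun x : ℝ => ((1 + c * Real.cosh x) ^ n)⁻¹ := by
    exact ((continuous_const.add (continuous_const.mul Real.continuous_cosh)).pow n).inv₀
      (fun x => (pow_pos (hbase x) n).ne')
  -- crude majorant for integrability
  have hmaj : ∀ x : ℝ, 0 ≤ x → ((1 + c * Real.cosh x) ^ n)⁻¹ ≤ 2 / c * Real.exp (-x) := by
    intro x hx
    have h1 : c * Real.exp x / 2 ≤ (1 + c * Real.cosh x) ^ n := by
      have h2 : c * Real.exp x / 2 ≤ 1 + c * Real.cosh x := by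
        have := exp_div_two_le_cosh x
        nlinarith
      refine h2.trans (le_self_pow₀ ?_ (by omega))
      nlinarith [Real.one_le_cosh x]
    have hp : 0 < c * Real.exp x / 2 := by positivity
    calc ((1 + c * Real.cosh x) ^ n)⁻¹ ≤ (c * Real.exp x / 2)⁻¹ :=
          inv_anti₀ hp h1
    _ = 2 / c * Real.exp (-x) := by
          rw [Real.exp_neg]; field_simp
  have hexpint : ∀ (C T : ℝ), IntegrableOn (fun x => C * Real.exp (-x)) (Set.Ioi T) := by
    intro C T
    have h := (exp_neg_integrableOn_Ioi T one_pos).const_mul C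
    simpa [IntegrableOn] using h
  have hgint : IntegrableOn (fun x => ((1 + c * Real.cosh x) ^ n)⁻¹) (Set.Ioi R) := by
    refine Integrable.mono (hexpint (2 / c) R)
      hgcont.aestronglyMeasurable.restrict ?_
    · filter_upwards [ae_restrict_mem measurableSet_Ioi] with x hx
      rw [Set.mem_Ioi] at hx
      rw [Real.norm_eq_abs, Real.norm_eq_abs, abs_of_nonneg (by positivity),
        abs_of_nonneg (by positivity)]
      exact hmaj x (by linarith)
  -- pointwise tail bound
  have hP2 : ∀ x : ℝ, R ≤ x → ((1 + c * Real.cosh x) ^ n)⁻¹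
      ≤ M * (2 / c * Real.exp (-x)) := by
    intro x hx
    have hcosh : Real.cosh R ≤ Real.cosh x := by
      rw [Real.cosh_le_cosh, abs_of_nonneg hR, abs_of_nonneg (hR.trans hx)]
      exact hx
    have hkey : (1 + c * Real.cosh R) ^ (n - 1) * (c * Real.exp x / 2)
        ≤ (1 + c * Real.cosh x) ^ n := by
      have hpow : (1 + c * Real.cosh x) ^ n
          = (1 + c * Real.cosh x) ^ (n - 1) * (1 + c * Real.cosh x) := by
        conv_lhs => rw [show n = (n - 1) + 1 from by omega]
        rw [pow_succ]
      rw [hpow]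
      apply mul_le_mul
      · exact pow_le_pow_left₀ (hbase R).le (by nlinarith) _
      · have := exp_div_two_le_cosh x
        nlinarith
      · positivity
      · positivity
    have hp : (0:ℝ) < (1 + c * Real.cosh R) ^ (n - 1) * (c * Real.exp x / 2) := by
      have := hbase R; positivity
    calc ((1 + c * Real.cosh x) ^ n)⁻¹
        ≤ ((1 + c * Real.cosh R) ^ (n - 1) * (c * Real.exp x / 2))⁻¹ :=
          inv_anti₀ hp hkey
    _ = M * (2 / c * Real.exp (-x)) := by
          rw [mul_inv, hM_def, Real.exp_neg]
          congr 1
          field_simp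
  have hM0 : 0 ≤ M := by
    have := hbase R; positivity
  -- tail integral estimate
  have htail : ∀ T : ℝ, R ≤ T → ∫ x in Set.Ioi T, ((1 + c * Real.cosh x) ^ n)⁻¹
      ≤ M * (2 / c) * Real.exp (-T) := by
    intro T hT
    have h1 : ∫ x in Set.Ioi T, ((1 + c * Real.cosh x) ^ n)⁻¹
        ≤ ∫ x in Set.Ioi T, M * (2 / c) * Real.exp (-x) := by
      apply setIntegral_mono_on (hgint.mono_set (Set.Ioi_subset_Ioi hT))
        (hexpint (M * (2 / c)) T) measurableSet_Ioi
      intro x hx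
      rw [Set.mem_Ioi] at hx
      have h := hP2 x (hT.trans hx.le)
      calc ((1 + c * Real.cosh x) ^ n)⁻¹ ≤ M * (2 / c * Real.exp (-x)) := h
      _ = M * (2 / c) * Real.exp (-x) := by ring
    rw [integral_const_mul, integral_exp_neg_Ioi] at h1
    exact h1
  have hrhs1 : (0:ℝ) ≤ (2 + |Real.log (1 - Real.exp (-a / 2))|)
      * Real.exp (-a * Real.cosh R / 2) := by positivity
  rcases le_or_gt (Real.log (2 / c)) R with hcase | hcase
  · -- log(2/c) ≤ R : tail bound only
    have h1 := htail R le_rfl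
    have h2 : 2 / c * Real.exp (-R) ≤ 1 := by
      have h3 : Real.exp (-R) ≤ (2 / c)⁻¹ := by
        rw [← Real.exp_log (by positivity : (0:ℝ) < 2 / c), ← Real.exp_neg,
          Real.exp_le_exp]
        linarith
      calc 2 / c * Real.exp (-R) ≤ 2 / c * (2 / c)⁻¹ :=
            mul_le_mul_of_nonneg_left h3 (by positivity)
      _ = 1 := mul_inv_cancel₀ (by positivity)
    have h4 : M * (2 / c) * Real.exp (-R) ≤ M := by
      calc M * (2 / c) * Real.exp (-R) = M * (2 / c * Real.exp (-R)) := by ring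
      _ ≤ M * 1 := mul_le_mul_of_nonneg_left h2 hM0
      _ = M := mul_one M
    linarith
  · -- R < log(2/c) : split
    set L : ℝ := Real.log (2 / c) with hL_def
    have hL0 : 0 ≤ L := hR.trans hcase.le
    have hexpL : Real.exp L = 2 / c := Real.exp_log (by positivity)
    have hsplit : ∫ x in Set.Ioi R, ((1 + c * Real.cosh x) ^ n)⁻¹
        = (∫ x in Set.Ioc R L, ((1 + c * Real.cosh x) ^ n)⁻¹)
          + ∫ x in Set.Ioi L, ((1 + c * Real.cosh x) ^ n)⁻¹ := by
      rw [← Set.Ioc_union_Ioi_eq_Ioi hcase.le,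
        setIntegral_union (Set.Ioc_disjoint_Ioi le_rfl) measurableSet_Ioi
          (hgint.mono_set ((Set.Ioc_union_Ioi_eq_Ioi hcase.le) ▸ Set.subset_union_left))
          (hgint.mono_set (Set.Ioi_subset_Ioi hcase.le))]
    have hpiece1 : ∫ x in Set.Ioc R L, ((1 + c * Real.cosh x) ^ n)⁻¹
        ≤ (2 + |Real.log (1 - Real.exp (-a / 2))|) * Real.exp (-(a * Real.cosh R / 2)) := by
      have hstep : ∫ x in Set.Ioc R L, ((1 + c * Real.cosh x) ^ n)⁻¹
          ≤ ∫ x in Set.Ioc R L, Real.exp (-(a * Real.cosh x / 2)) := by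
        apply setIntegral_mono_on (hgint.mono_set Set.Ioc_subset_Ioi_self)
          ((expcosh_integrable R ha hR).mono_set Set.Ioc_subset_Ioi_self) measurableSet_Ioc
        intro x hx
        obtain ⟨hx1, hx2⟩ := hx
        have hx0 : (0:ℝ) ≤ x := hR.trans hx1.le
        have hu2 : c * Real.cosh x ≤ 2 := by
          have h5 : Real.cosh x ≤ Real.exp x := cosh_le_exp hx0
          have h6 : Real.exp x ≤ Real.exp L := Real.exp_le_exp.2 hx2
          rw [hexpL] at h6
          calc c * Real.cosh x ≤ c * Real.exp x := by nlinarith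
          _ ≤ c * (2 / c) := by nlinarith
          _ = 2 := by field_simp
        have hu0 : 0 ≤ c * Real.cosh x := by nlinarith [Real.one_le_cosh x]
        have h7 : Real.exp (c * Real.cosh x / 2) ≤ 1 + c * Real.cosh x :=
          exp_half_le hu0 hu2
        have h8 : Real.exp (a * Real.cosh x / 2) ≤ (1 + c * Real.cosh x) ^ n := by
          have h9 : a * Real.cosh x / 2 = n * (c * Real.cosh x / 2) := by
            rw [← hcn]; ring
          rw [h9, Real.exp_nat_mul]
          exact pow_le_pow_left₀ (Real.exp_pos _).le h7 n
        calc ((1 + c * Real.cosh x) ^ n)⁻¹ ≤ (Real.exp (a * Real.cosh x / 2))⁻¹ :=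
              inv_anti₀ (Real.exp_pos _) h8
        _ = Real.exp (-(a * Real.cosh x / 2)) := (Real.exp_neg _).symm
      refine hstep.trans ?_
      have hmono : ∫ x in Set.Ioc R L, Real.exp (-(a * Real.cosh x / 2))
          ≤ ∫ x in Set.Ioi R, Real.exp (-(a * Real.cosh x / 2)) := by
        apply setIntegral_mono_set (expcosh_integrable R ha hR)
          (Filter.Eventually.of_forall fun x => (Real.exp_pos _).le)
          (HasSubset.Subset.eventuallyLE Set.Ioc_subset_Ioi_self)
      exact hmono.trans (expIntegral R ha hR)
    have hpiece2 : ∫ x in Set.Ioi L, ((1 + c * Real.cosh x) ^ n)⁻¹ ≤ M := by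
      have h1 := htail L hcase.le
      have h2 : M * (2 / c) * Real.exp (-L) = M := by
        rw [Real.exp_neg, hexpL]
        field_simp
      linarith
    rw [hsplit]
    have hfin : -a * Real.cosh R / 2 = -(a * Real.cosh R / 2) := by ring
    rw [hfin]
    linarith
end
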